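/- Let n ≥ 1 be a natural number, let q₀, q₁ be complex numbers with q = q₀ · q₁, and let c : Fin (2*n) → Fin (2*n) → ℂ be any function. Then, as m → ∞, the expression (m : ℂ)^(-n) · ∑_{k : Fin (2*n) → Fin m} (∑_{σ a pair partition respected by k} q₀^ι(σ)) · (∑_{σ' a pair partition respected by k} q₁^ι(σ') · ∏_{{r,t} a part of σ', r < t} c r t) converges to ∑_{σ a pair partition} q^ι(σ) · ∏_{{r,t} a part of σ, r < t} c r t. (This is the combinatorial content of the statement that the mixed moments of the elements u_m(ξ_j) with respect to the tensor product of the vacuum states on Γ_{q₀}(ℝ^m) ⊗ Γ_{q₁}(H ⊗ ℂ^m) converge to the q-quasi-free Wick moments with q = q₀q₁.) -/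

import Mathlib

open Finset

/-- The setoid on `Fin N` induced by a finpartition of `univ : Finset (Fin N)`:
two elements are related iff they lie in a common part. -/
def Finpartition.toSetoidFin {N : ℕ} (σ : Finpartition (univ : Finset (Fin N))) :
    Setoid (Fin N) where
  r a b := ∃ s ∈ σ.parts, a ∈ s ∧ b ∈ s
  iseqv :=
    { refl := fun a => by
        obtain ⟨s, hs, ha⟩ := σ.exists_mem (mem_univ a)
        exact ⟨s, hs, ha, ha⟩
      symm := fun h => by
        obtain ⟨s, hs, ha, hb⟩ := h
        exact ⟨s, hs, hb, ha⟩
      trans := fun h h' => by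
        obtain ⟨s, hs, ha, hb⟩ := h
        obtain ⟨t, ht, hb', hc⟩ := h'
        obtain rfl := σ.eq_of_mem_parts hs ht hb hb'
        exact ⟨s, hs, ha, hc⟩ }

/-- The join `σ ⊔ τ` of two finpartitions of `univ : Finset (Fin N)` in the lattice of
finpartitions under the refinement order: its parts are the equivalence classes of the
join of the associated setoids. -/
noncomputable def Finpartition.finJoin {N : ℕ}
    (σ τ : Finpartition (univ : Finset (Fin N))) :
    Finpartition (univ : Finset (Fin N)) :=
  letI : DecidableRel (σ.toSetoidFin ⊔ τ.toSetoidFin).r := Classical.decRel _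
  Finpartition.ofSetoid (σ.toSetoidFin ⊔ τ.toSetoidFin)

/-- A pair partition: a finpartition all of whose parts have exactly two elements. -/
def IsPairPartition {N : ℕ} (σ : Finpartition (univ : Finset (Fin N))) : Prop :=
  ∀ s ∈ σ.parts, s.card = 2

instance {N : ℕ} : DecidablePred (IsPairPartition (N := N)) := fun σ =>
  decidable_of_iff (∀ s ∈ σ.parts, s.card = 2) Iff.rfl

/-- `k : Fin d → Fin m` respects a finpartition `σ` if it is constant on every part. -/
def Respects {d m : ℕ} (k : Fin d → Fin m)
    (σ : Finpartition (univ : Finset (Fin d))) : Prop :=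
  ∀ s ∈ σ.parts, ∀ a ∈ s, ∀ b ∈ s, k a = k b

instance {d m : ℕ} (k : Fin d → Fin m) : DecidablePred (Respects k) := fun σ =>
  decidable_of_iff (∀ s ∈ σ.parts, ∀ a ∈ s, ∀ b ∈ s, k a = k b) Iff.rfl

/-- The number of crossings of a pair partition: the number of (ordered, hence each counted
once) pairs of parts `{a,b}`, `{c,d}` with `a < c < b < d`. -/
def crossings {N : ℕ} (σ : Finpartition (univ : Finset (Fin N))) : ℕ :=
  ((σ.parts ×ˢ σ.parts).filter fun st =>
    ∃ a ∈ st.1, ∃ b ∈ st.1, ∃ c ∈ st.2, ∃ d ∈ st.2, a < c ∧ c < b ∧ b < d).card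

/-- The product `∏ c r t` over the parts `{r, t}` (with `r < t`) of a pair partition. -/
def pairProd {N : ℕ} (σ : Finpartition (univ : Finset (Fin N)))
    (c : Fin N → Fin N → ℂ) : ℂ :=
  ∏ s ∈ σ.parts, if h : s.Nonempty then c (s.min' h) (s.max' h) else 1

/-- with `q = q₀ * q₁`, as `m → ∞`,
`m^(-n) ∑_k (∑_{σ respected by k} q₀^ι(σ)) (∑_{σ' respected by k} q₁^ι(σ') ∏_{{r,t}∈σ'} c r t)`
converges to `∑_σ q^ι(σ) ∏_{{r,t}∈σ} c r t`, the sums being over pair partitions of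
`Fin (2*n)`. -/
lemma respects_iff {N m : ℕ} (k : Fin N → Fin m)
    (σ : Finpartition (univ : Finset (Fin N))) :
    Respects k σ ↔ σ.toSetoidFin ≤ Setoid.ker k := by
  rw [Setoid.le_def]
  constructor
  · rintro h a b ⟨s, hs, ha, hb⟩
    exact h s hs a ha b hb
  · intro h s hs a ha b hb
    exact h ⟨s, hs, ha, hb⟩

noncomputable def respectsEquiv {N : ℕ} (m : ℕ) (r : Setoid (Fin N)) :
    {k : Fin N → Fin m // r ≤ Setoid.ker k} ≃ (Quotient r → Fin m) where
  toFun k := Quotient.lift k.1 fun a b h => k.2 h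
  invFun g := ⟨fun a => g (Quotient.mk r a), fun a b h => congrArg g (Quotient.sound h)⟩
  left_inv k := rfl
  right_inv g := funext fun q => Quotient.inductionOn q fun _ => rfl

lemma card_filter_respects {N m : ℕ} (σ τ : Finpartition (univ : Finset (Fin N))) :
    ((univ : Finset (Fin N → Fin m)).filter fun k => Respects k σ ∧ Respects k τ).card
      = m ^ Nat.card (Quotient (σ.toSetoidFin ⊔ τ.toSetoidFin)) := by
  classical
  rw [← Fintype.card_subtype]
  rw [← Nat.card_eq_fintype_card]
  rw [Nat.card_congr ((Equiv.subtypeEquivRight fun k => by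
    rw [respects_iff, respects_iff, ← sup_le_iff]).trans
    (respectsEquiv m (σ.toSetoidFin ⊔ τ.toSetoidFin)))]
  rw [Nat.card_fun]
  simp

section fibers
variable {n : ℕ}

lemma fiber_eq_part {N : ℕ} (σ : Finpartition (univ : Finset (Fin N)))
    (r : Setoid (Fin N)) (hle : σ.toSetoidFin ≤ r) [DecidableEq (Quotient r)]
    {a : Fin N} {s : Finset (Fin N)} (hs : s ∈ σ.parts) (ha : a ∈ s) :
    s ⊆ univ.filter fun x => Quotient.mk r x = Quotient.mk r a := by
  intro b hb
  simp only [mem_filter, mem_univ, true_and]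
  exact Quotient.sound (hle ⟨s, hs, hb, ha⟩)

lemma fiber_two_le (σ : Finpartition (univ : Finset (Fin (2 * n))))
    (hσ : IsPairPartition σ) (r : Setoid (Fin (2 * n))) (hle : σ.toSetoidFin ≤ r)
    [DecidableEq (Quotient r)] (qq : Quotient r) :
    2 ≤ (univ.filter fun a => Quotient.mk r a = qq).card := by
  obtain ⟨a, rfl⟩ := Quotient.exists_rep qq
  obtain ⟨s, hs, ha⟩ := σ.exists_mem (mem_univ a)
  calc 2 = s.card := (hσ s hs).symm
    _ ≤ _ := card_le_card (fiber_eq_part σ r hle hs ha)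

lemma sum_fibers (r : Setoid (Fin (2 * n))) [Fintype (Quotient r)]
    [DecidableEq (Quotient r)] :
    ∑ qq : Quotient r, (univ.filter fun a => Quotient.mk r a = qq).card = 2 * n := by
  rw [← Finset.card_eq_sum_card_fiberwise (fun a _ => mem_univ (Quotient.mk r a))]
  simp

lemma J_le (σ τ : Finpartition (univ : Finset (Fin (2 * n))))
    (hσ : IsPairPartition σ) :
    Nat.card (Quotient (σ.toSetoidFin ⊔ τ.toSetoidFin)) ≤ n := by
  classical
  set r := σ.toSetoidFin ⊔ τ.toSetoidFin with hr
  letI : DecidableRel r.r := Classical.decRel _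
  rw [Nat.card_eq_fintype_card]
  have h1 : 2 * Fintype.card (Quotient r) ≤ 2 * n := by
    calc 2 * Fintype.card (Quotient r) = ∑ _qq : Quotient r, 2 := by
          rw [Finset.sum_const, card_univ]; ring
      _ ≤ ∑ qq : Quotient r, (univ.filter fun a => Quotient.mk r a = qq).card :=
          Finset.sum_le_sum fun qq _ => fiber_two_le σ hσ r le_sup_left qq
      _ = 2 * n := sum_fibers r
  omega

lemma J_self (σ : Finpartition (univ : Finset (Fin (2 * n))))
    (hσ : IsPairPartition σ) :
    Nat.card (Quotient (σ.toSetoidFin ⊔ σ.toSetoidFin)) = n := by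
  classical
  rw [sup_idem]
  set r := σ.toSetoidFin with hr
  letI : DecidableRel r.r := Classical.decRel _
  rw [Nat.card_eq_fintype_card]
  have hfib : ∀ qq : Quotient r, (univ.filter fun a => Quotient.mk r a = qq).card = 2 := by
    intro qq
    obtain ⟨a, rfl⟩ := Quotient.exists_rep qq
    obtain ⟨s, hs, ha⟩ := σ.exists_mem (mem_univ a)
    have hsub : (univ.filter fun x => Quotient.mk r x = Quotient.mk r a) ⊆ s := by
      intro b hb
      simp only [mem_filter, mem_univ, true_and] at hb
      obtain ⟨t, ht, hbt, hat⟩ := Quotient.exact hb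
      obtain rfl := σ.eq_of_mem_parts ht hs hat ha
      exact hbt
    have heq : (univ.filter fun x => Quotient.mk r x = Quotient.mk r a) = s :=
      Finset.Subset.antisymm hsub (fiber_eq_part σ r le_rfl hs ha)
    rw [heq, hσ s hs]
  have h1 : 2 * Fintype.card (Quotient r) = 2 * n := by
    calc 2 * Fintype.card (Quotient r) = ∑ qq : Quotient r,
          (univ.filter fun a => Quotient.mk r a = qq).card := by
          rw [Finset.sum_congr rfl fun qq _ => hfib qq, Finset.sum_const, card_univ]; ring
      _ = 2 * n := sum_fibers r
  omega

lemma eq_of_J_eq (σ τ : Finpartition (univ : Finset (Fin (2 * n))))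
    (hσ : IsPairPartition σ) (hτ : IsPairPartition τ)
    (h : Nat.card (Quotient (σ.toSetoidFin ⊔ τ.toSetoidFin)) = n) : σ = τ := by
  classical
  set r := σ.toSetoidFin ⊔ τ.toSetoidFin with hr
  letI : DecidableRel r.r := Classical.decRel _
  rw [Nat.card_eq_fintype_card] at h
  -- every fiber has card exactly 2
  have hsum : ∑ qq : Quotient r, (univ.filter fun a => Quotient.mk r a = qq).card
      = ∑ _qq : Quotient r, 2 := by
    rw [sum_fibers r, Finset.sum_const, card_univ, h]; ring
  have hfib : ∀ qq : Quotient r, (univ.filter fun a => Quotient.mk r a = qq).card = 2 :=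
    fun qq => ((Finset.sum_eq_sum_iff_of_le
      (fun qq _ => fiber_two_le σ hσ r le_sup_left qq)).1 hsum.symm qq (mem_univ qq)).symm
  -- each part of σ (resp. τ) equals the fiber of any of its elements
  have key : ∀ (ρ : Finpartition (univ : Finset (Fin (2 * n)))), IsPairPartition ρ →
      ρ.toSetoidFin ≤ r → ∀ {a : Fin (2 * n)} {s : Finset (Fin (2 * n))},
      s ∈ ρ.parts → a ∈ s → s = univ.filter fun x => Quotient.mk r x = Quotient.mk r a := by
    intro ρ hρ hle a s hs ha
    apply Finset.eq_of_subset_of_card_le (fiber_eq_part ρ r hle hs ha)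
    rw [hfib, hρ s hs]
  apply Finpartition.ext
  apply Finset.ext
  intro s
  constructor
  · intro hs
    obtain ⟨a, ha⟩ := σ.nonempty_of_mem_parts hs
    obtain ⟨t, ht, hat⟩ := τ.exists_mem (mem_univ a)
    rwa [key σ hσ le_sup_left hs ha, ← key τ hτ le_sup_right ht hat]
  · intro hs
    obtain ⟨a, ha⟩ := τ.nonempty_of_mem_parts hs
    obtain ⟨t, ht, hat⟩ := σ.exists_mem (mem_univ a)
    rwa [key τ hτ le_sup_right hs ha, ← key σ hσ le_sup_left ht hat]

end fibers

lemma tendsto_zpow_mul_pow {n j : ℕ} (hj : j < n) :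
    Filter.Tendsto (fun m : ℕ => (m : ℂ) ^ (-(n : ℤ)) * (m : ℂ) ^ j)
      Filter.atTop (nhds 0) := by
  have hp : n - j ≠ 0 := by omega
  have h0 : Filter.Tendsto (fun m : ℕ => (((m : ℝ)) ^ (n - j))⁻¹)
      Filter.atTop (nhds 0) :=
    tendsto_inv_atTop_zero.comp ((Filter.tendsto_pow_atTop hp : Filter.Tendsto (fun x : ℝ => x ^ (n-j)) Filter.atTop Filter.atTop).comp
      tendsto_natCast_atTop_atTop)
  rw [tendsto_zero_iff_norm_tendsto_zero]
  apply h0.congr'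
  filter_upwards [Filter.eventually_ge_atTop 1] with m hm
  have hm0 : (m : ℂ) ≠ 0 := by
    simp only [ne_eq, Nat.cast_eq_zero]; omega
  have : (m : ℂ) ^ (-(n : ℤ)) * (m : ℂ) ^ j = ((m : ℂ) ^ (n - j))⁻¹ := by
    rw [zpow_neg, zpow_natCast]
    have : (m : ℂ) ^ n = (m : ℂ) ^ (n - j) * (m : ℂ) ^ j := by
      rw [← pow_add]; congr 1; omega
    rw [this, mul_inv]
    field_simp
  rw [this]
  rw [norm_inv, norm_pow, Complex.norm_natCast]

lemma tendsto_term {n j : ℕ} (C : ℂ) (hj : j ≤ n) :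
    Filter.Tendsto (fun m : ℕ => C * ((m : ℂ) ^ (-(n : ℤ)) * (m : ℂ) ^ j))
      Filter.atTop (nhds (if j = n then C else 0)) := by
  rcases eq_or_lt_of_le hj with rfl | hlt
  · rw [if_pos rfl]
    have : Filter.Tendsto (fun _ : ℕ => C) Filter.atTop (nhds C) := tendsto_const_nhds
    apply this.congr'
    filter_upwards [Filter.eventually_ge_atTop 1] with m hm
    have hm0 : (m : ℂ) ≠ 0 := by
      simp only [ne_eq, Nat.cast_eq_zero]; omega
    rw [zpow_neg, zpow_natCast, inv_mul_cancel₀ (pow_ne_zero _ hm0), mul_one]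
  · rw [if_neg hlt.ne]
    simpa using (tendsto_zpow_mul_pow hlt).const_mul C

theorem tendsto_wick_moments (n : ℕ) (hn : 1 ≤ n) (q q₀ q₁ : ℂ) (hq : q = q₀ * q₁)
    (c : Fin (2 * n) → Fin (2 * n) → ℂ) :
    Filter.Tendsto
      (fun m : ℕ =>
        (m : ℂ) ^ (-(n : ℤ)) *
          ∑ k : Fin (2 * n) → Fin m,
            (∑ σ ∈ univ.filter fun σ => IsPairPartition σ ∧ Respects k σ,
              q₀ ^ crossings σ) *
            (∑ σ' ∈ univ.filter fun σ' => IsPairPartition σ' ∧ Respects k σ',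
              q₁ ^ crossings σ' * pairProd σ' c))
      Filter.atTop
      (nhds (∑ σ ∈ univ.filter fun σ => IsPairPartition σ,
        q ^ crossings σ * pairProd σ c)) := by
  classical
  have key : ∀ m : ℕ,
      ((m : ℂ) ^ (-(n : ℤ)) *
        ∑ k : Fin (2 * n) → Fin m,
          (∑ σ ∈ univ.filter fun σ => IsPairPartition σ ∧ Respects k σ,
            q₀ ^ crossings σ) *
          (∑ σ' ∈ univ.filter fun σ' => IsPairPartition σ' ∧ Respects k σ',
            q₁ ^ crossings σ' * pairProd σ' c))
      = ∑ σ ∈ univ.filter IsPairPartition, ∑ τ ∈ univ.filter IsPairPartition,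
          (q₀ ^ crossings σ * (q₁ ^ crossings τ * pairProd τ c)) *
            ((m : ℂ) ^ (-(n : ℤ)) *
              (m : ℂ) ^ (Nat.card (Quotient (σ.toSetoidFin ⊔ τ.toSetoidFin)))) := by
    intro m
    have h1 : ∀ (k : Fin (2 * n) → Fin m)
        (f : Finpartition (univ : Finset (Fin (2 * n))) → ℂ),
        (∑ σ ∈ univ.filter fun σ => IsPairPartition σ ∧ Respects k σ, f σ)
          = ∑ σ ∈ univ.filter IsPairPartition, if Respects k σ then f σ else 0 := by
      intro k f
      rw [← Finset.sum_filter, Finset.filter_filter]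
    have h2 : ∀ k : Fin (2 * n) → Fin m,
        (∑ σ ∈ univ.filter fun σ => IsPairPartition σ ∧ Respects k σ,
            q₀ ^ crossings σ) *
        (∑ σ' ∈ univ.filter fun σ' => IsPairPartition σ' ∧ Respects k σ',
            q₁ ^ crossings σ' * pairProd σ' c)
        = ∑ σ ∈ univ.filter IsPairPartition, ∑ τ ∈ univ.filter IsPairPartition,
            if Respects k σ ∧ Respects k τ then
              q₀ ^ crossings σ * (q₁ ^ crossings τ * pairProd τ c) else 0 := by
      intro k
      rw [h1 k, h1 k, Finset.sum_mul_sum]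
      exact Finset.sum_congr rfl fun σ _ => Finset.sum_congr rfl fun τ _ => by
        split_ifs <;> simp_all
    rw [Finset.sum_congr rfl fun k (_ : k ∈ univ) => h2 k]
    rw [Finset.sum_comm, Finset.mul_sum]
    refine Finset.sum_congr rfl fun σ _ => ?_
    rw [Finset.sum_comm, Finset.mul_sum]
    refine Finset.sum_congr rfl fun τ _ => ?_
    rw [← Finset.sum_filter, Finset.sum_const, card_filter_respects σ τ, nsmul_eq_mul]
    push_cast
    ring
  apply Filter.Tendsto.congr (fun m => (key m).symm)
  have target : (∑ σ ∈ univ.filter fun σ => IsPairPartition σ,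
        q ^ crossings σ * pairProd σ c)
      = ∑ σ ∈ univ.filter IsPairPartition, ∑ τ ∈ univ.filter IsPairPartition,
          (if Nat.card (Quotient (σ.toSetoidFin ⊔ τ.toSetoidFin)) = n then
            q₀ ^ crossings σ * (q₁ ^ crossings τ * pairProd τ c) else 0) := by
    refine Finset.sum_congr rfl fun σ hσ => ?_
    have hσP : IsPairPartition σ := (mem_filter.1 hσ).2
    have step : ∀ τ ∈ univ.filter IsPairPartition,
        (if Nat.card (Quotient (σ.toSetoidFin ⊔ τ.toSetoidFin)) = n then
          q₀ ^ crossings σ * (q₁ ^ crossings τ * pairProd τ c) else 0)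
        = if σ = τ then q₀ ^ crossings σ * (q₁ ^ crossings τ * pairProd τ c) else 0 := by
      intro τ hτ
      exact if_congr ⟨fun h => eq_of_J_eq σ τ hσP (mem_filter.1 hτ).2 h,
        fun h => h ▸ J_self σ hσP⟩ rfl rfl
    rw [Finset.sum_congr rfl step, Finset.sum_ite_eq, if_pos hσ, hq, mul_pow]
    ring
  rw [target]
  refine tendsto_finset_sum _ fun σ hσ => tendsto_finset_sum _ fun τ hτ => ?_
  exact tendsto_term _ (J_le σ τ (mem_filter.1 hσ).2)
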